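/- arXiv:1706.01936 — 7 statements merged into one kernel-verified Lean document; each statement's English description precedes it below -/
import Mathlib

section
/- Let μ > 0, θ ∈ (0,1), C > 0, D > 0 and t_s > t_e > 0 be real constants. Define U(λ) = μ(1−θ)·[log₂(1 + (λC − 2D)·t_s) − log₂(1 + (λC − 2D)·t_e)] − θ·λ²·C + 2θ·λ·D on the interval I = {λ ∈ ℝ : 1 + (λC − 2D)·t_s > 0 and 1 + (λC − 2D)·t_e > 0}. Then I is an interval and U is strictly concave on I. -/
/-- The transmitter's (leader's) utility
`U(λ) = μ(1−θ)[log₂(1+(λC−2D)tₛ) − log₂(1+(λC−2D)tₑ)] − θλ²C + 2θλD`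
is strictly concave on the set `I` where both log arguments are positive,
and `I` is an interval (order-connected). -/
theorem stmt1 (μ θ C D ts te : ℝ) (hμ : 0 < μ) (hθ : θ ∈ Set.Ioo (0:ℝ) 1)
    (hC : 0 < C) (hD : 0 < D) (hte : 0 < te) (hts : te < ts)
    (U : ℝ → ℝ)
    (hU : ∀ lam, U lam =
      μ * (1 - θ) * (Real.logb 2 (1 + (lam * C - 2 * D) * ts)
        - Real.logb 2 (1 + (lam * C - 2 * D) * te))
      - θ * lam ^ 2 * C + 2 * θ * lam * D)
    (I : Set ℝ)
    (hI : I = {lam : ℝ | 0 < 1 + (lam * C - 2 * D) * ts ∧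
      0 < 1 + (lam * C - 2 * D) * te}) :
    I.OrdConnected ∧ StrictConcaveOn ℝ I U := by
  obtain ⟨hθ0, hθ1⟩ := hθ
  have hts0 : 0 < ts := hte.trans hts
  have hUeq : U = fun lam => μ * (1 - θ) * (Real.logb 2 (1 + (lam * C - 2 * D) * ts)
        - Real.logb 2 (1 + (lam * C - 2 * D) * te))
      - θ * lam ^ 2 * C + 2 * θ * lam * D := funext hU
  subst hUeq hI
  -- convexity of I
  have hconv : Convex ℝ {lam : ℝ | 0 < 1 + (lam * C - 2 * D) * ts ∧
      0 < 1 + (lam * C - 2 * D) * te} := by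
    intro x hx y hy a b ha hb hab
    obtain ⟨hx1, hx2⟩ := hx
    obtain ⟨hy1, hy2⟩ := hy
    have key : ∀ (A B : ℝ), 0 < A → 0 < B → 0 < a * A + b * B := by
      intro A B hA hB
      rcases eq_or_lt_of_le ha with h | h
      · have hb1 : b = 1 := by linarith
        simp [← h, hb1, hB]
      · exact add_pos_of_pos_of_nonneg (mul_pos h hA) (mul_nonneg hb hB.le)
    constructor
    · show 0 < 1 + ((a * x + b * y) * C - 2 * D) * ts
      have heq : 1 + ((a * x + b * y) * C - 2 * D) * ts
          = a * (1 + (x * C - 2 * D) * ts) + b * (1 + (y * C - 2 * D) * ts) := by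
        linear_combination (2 * D * ts - 1) * hab
      rw [heq]; exact key _ _ hx1 hy1
    · show 0 < 1 + ((a * x + b * y) * C - 2 * D) * te
      have heq : 1 + ((a * x + b * y) * C - 2 * D) * te
          = a * (1 + (x * C - 2 * D) * te) + b * (1 + (y * C - 2 * D) * te) := by
        linear_combination (2 * D * te - 1) * hab
      rw [heq]; exact key _ _ hx2 hy2
  -- I is open
  have hopen : IsOpen {lam : ℝ | 0 < 1 + (lam * C - 2 * D) * ts ∧
      0 < 1 + (lam * C - 2 * D) * te} := by
    have hcont : ∀ t : ℝ, Continuous (fun lam : ℝ => 1 + (lam * C - 2 * D) * t) := by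
      intro t; fun_prop
    exact (isOpen_lt continuous_const (hcont ts)).inter
      (isOpen_lt continuous_const (hcont te))
  refine ⟨hconv.ordConnected, ?_⟩
  set V : ℝ → ℝ := fun lam => μ * (1 - θ) * (Real.logb 2 (1 + (lam * C - 2 * D) * ts)
        - Real.logb 2 (1 + (lam * C - 2 * D) * te))
      - θ * lam ^ 2 * C + 2 * θ * lam * D with hV
  set V' : ℝ → ℝ := fun lam => μ * (1 - θ) * (C * ts / (1 + (lam * C - 2 * D) * ts) / Real.log 2
        - C * te / (1 + (lam * C - 2 * D) * te) / Real.log 2)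
      - θ * (2 * lam) * C + 2 * θ * D with hV'
  have hps : ∀ lam t : ℝ, HasDerivAt (fun l : ℝ => 1 + (l * C - 2 * D) * t) (C * t) lam := by
    intro lam t
    have : HasDerivAt (fun l : ℝ => 1 + (l * C - 2 * D) * t) (0 + (1 * C - 0) * t) lam := by
      exact (hasDerivAt_const lam 1).add
        (((hasDerivAt_id lam).mul_const C |>.sub (hasDerivAt_const lam (2*D))).mul_const t)
    simpa using this
  have hderivV : ∀ lam ∈ {lam : ℝ | 0 < 1 + (lam * C - 2 * D) * ts ∧
      0 < 1 + (lam * C - 2 * D) * te}, HasDerivAt V (V' lam) lam := by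
    rintro lam ⟨h1, h2⟩
    have hlog1 : HasDerivAt (fun l : ℝ => Real.log (1 + (l * C - 2 * D) * ts))
        (C * ts / (1 + (lam * C - 2 * D) * ts)) lam := (hps lam ts).log h1.ne'
    have hlog2 : HasDerivAt (fun l : ℝ => Real.log (1 + (l * C - 2 * D) * te))
        (C * te / (1 + (lam * C - 2 * D) * te)) lam := (hps lam te).log h2.ne'
    have hq : HasDerivAt (fun l : ℝ => - (θ * l ^ 2 * C) + 2 * θ * l * D)
        (- (θ * (2 * lam) * C) + 2 * θ * D) lam := by
      have h2' : HasDerivAt (fun l : ℝ => θ * l ^ 2 * C) (θ * (2 * lam) * C) lam := by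
        have := ((hasDerivAt_pow 2 lam).const_mul θ).mul_const C
        simpa [mul_comm, mul_assoc, mul_left_comm] using this
      simpa using h2'.fun_neg.fun_add (((hasDerivAt_id lam).const_mul (2*θ)).mul_const D)
    have hmain : HasDerivAt (fun l : ℝ => μ * (1 - θ) *
        (Real.logb 2 (1 + (l * C - 2 * D) * ts) - Real.logb 2 (1 + (l * C - 2 * D) * te)))
        (μ * (1 - θ) * (C * ts / (1 + (lam * C - 2 * D) * ts) / Real.log 2
          - C * te / (1 + (lam * C - 2 * D) * te) / Real.log 2)) lam := by
      have := ((hlog1.div_const (Real.log 2)).sub (hlog2.div_const (Real.log 2))).const_mul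
        (μ * (1 - θ))
      simpa [Real.logb] using this
    have := hmain.fun_add hq
    simp only [hV, hV']
    convert this using 1
    · rfl
    · rfl
    · funext l; ring
    · ring
  have key : ∀ lam ∈ {lam : ℝ | 0 < 1 + (lam * C - 2 * D) * ts ∧
      0 < 1 + (lam * C - 2 * D) * te}, deriv^[2] V lam < 0 := by
    rintro lam hmem
    obtain ⟨h1, h2⟩ := hmem
    -- deriv V = V' eventually near lam
    have hev : deriv V =ᶠ[nhds lam] V' := by
      filter_upwards [hopen.mem_nhds ⟨h1, h2⟩] with x hx
      exact (hderivV x hx).deriv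
    have hd2 : deriv^[2] V lam = deriv V' lam := by
      simp only [Function.iterate_succ, Function.iterate_zero, Function.comp_apply, id]
      exact Filter.EventuallyEq.deriv_eq hev
    -- compute deriv V' lam
    have hr1 : HasDerivAt (fun l : ℝ => C * ts / (1 + (l * C - 2 * D) * ts) / Real.log 2)
        (-(C * ts * (C * ts)) / (1 + (lam * C - 2 * D) * ts) ^ 2 / Real.log 2) lam := by
      have := ((hasDerivAt_const lam (C * ts)).fun_div (hps lam ts) h1.ne').div_const (Real.log 2)
      convert this using 1
      · rfl
      · rfl
      ring
    have hr2 : HasDerivAt (fun l : ℝ => C * te / (1 + (l * C - 2 * D) * te) / Real.log 2)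
        (-(C * te * (C * te)) / (1 + (lam * C - 2 * D) * te) ^ 2 / Real.log 2) lam := by
      have := ((hasDerivAt_const lam (C * te)).fun_div (hps lam te) h2.ne').div_const (Real.log 2)
      convert this using 1
      · rfl
      · rfl
      ring
    have hq' : HasDerivAt (fun l : ℝ => - (θ * (2 * l) * C) + 2 * θ * D)
        (- (θ * 2 * C)) lam := by
      have : HasDerivAt (fun l : ℝ => θ * (2 * l) * C) (θ * 2 * C) lam := by
        have := (((hasDerivAt_id lam).const_mul 2).const_mul θ).mul_const C
        simpa [mul_comm, mul_assoc, mul_left_comm] using this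
      simpa using this.fun_neg.fun_add (hasDerivAt_const lam (2 * θ * D))
    have hV'deriv : HasDerivAt V'
        (μ * (1 - θ) * (-(C * ts * (C * ts)) / (1 + (lam * C - 2 * D) * ts) ^ 2 / Real.log 2
          - -(C * te * (C * te)) / (1 + (lam * C - 2 * D) * te) ^ 2 / Real.log 2)
          + - (θ * 2 * C)) lam := by
      have := ((hr1.fun_sub hr2).const_mul (μ * (1 - θ))).fun_add hq'
      simp only [hV']
      convert this using 1
      · rfl
      · rfl
      funext l; ring
    rw [hd2, hV'deriv.deriv]
    -- now the inequality
    set ps := 1 + (lam * C - 2 * D) * ts with hpsdef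
    set pe := 1 + (lam * C - 2 * D) * te with hpedef
    have hlog2pos : 0 < Real.log 2 := Real.log_pos (by norm_num)
    have hle : te * ps ≤ ts * pe := by
      simp only [hpsdef, hpedef]; nlinarith
    have hsq : (C * te) ^ 2 * ps ^ 2 ≤ (C * ts) ^ 2 * pe ^ 2 := by
      have h0 : 0 ≤ te * ps := le_of_lt (mul_pos hte h1)
      nlinarith [sq_nonneg C, mul_le_mul hle hle h0 (le_of_lt (mul_pos hts0 h2))]
    have hfrac : (C * te) ^ 2 / pe ^ 2 ≤ (C * ts) ^ 2 / ps ^ 2 := by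
      rw [div_le_div_iff₀ (by positivity) (by positivity)]
      nlinarith
    have hterm : μ * (1 - θ) * (-(C * ts * (C * ts)) / ps ^ 2 / Real.log 2
        - -(C * te * (C * te)) / pe ^ 2 / Real.log 2) ≤ 0 := by
      apply mul_nonpos_of_nonneg_of_nonpos
      · exact le_of_lt (mul_pos hμ (by linarith))
      · have : (C * ts * (C * ts)) / ps ^ 2 ≥ (C * te * (C * te)) / pe ^ 2 := by
          have := hfrac
          simpa [pow_two] using this
        have hdiff : -(C * ts * (C * ts)) / ps ^ 2 - -(C * te * (C * te)) / pe ^ 2 ≤ 0 := by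
          rw [neg_div, neg_div]
          linarith
        calc (-(C * ts * (C * ts)) / ps ^ 2 / Real.log 2
              - -(C * te * (C * te)) / pe ^ 2 / Real.log 2)
            = (-(C * ts * (C * ts)) / ps ^ 2 - -(C * te * (C * te)) / pe ^ 2) / Real.log 2 := by
              ring
          _ ≤ 0 := div_nonpos_of_nonpos_of_nonneg hdiff hlog2pos.le
    nlinarith [mul_pos (mul_pos hθ0 (by norm_num : (0:ℝ) < 2)) hC]
  apply strictConcaveOn_of_deriv2_neg hconv
  · intro x hx
    exact (hderivV x hx).differentiableAt.continuousAt.continuousWithinAt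
  · rw [hopen.interior_eq]
    exact key
end

section
/- Let t_s > t_e > 0 be real constants. Then the function f(θ) = (1−θ)·log₂( (1−θ+θ·t_s) / (1−θ+θ·t_e) ) is concave on the open interval (0,1). -/
open Set Real

section aux

variable (ts te : ℝ)

/-- helper: g without the 1/log 2 factor -/
private noncomputable def gAux (θ : ℝ) : ℝ :=
  (1 - θ) * (Real.log (1 - θ + θ * ts) - Real.log (1 - θ + θ * te))

private noncomputable def g1Aux (θ : ℝ) : ℝ :=
  (-1) * (Real.log (1 - θ + θ * ts) - Real.log (1 - θ + θ * te)) +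
    (1 - θ) * ((ts - 1) / (1 - θ + θ * ts) - (te - 1) / (1 - θ + θ * te))

private noncomputable def g2Aux (θ : ℝ) : ℝ :=
  (-1) * ((ts - 1) / (1 - θ + θ * ts) - (te - 1) / (1 - θ + θ * te)) +
    ((-1) * ((ts - 1) / (1 - θ + θ * ts) - (te - 1) / (1 - θ + θ * te)) +
      (1 - θ) * (-((ts - 1) * (ts - 1)) / ((1 - θ + θ * ts) * (1 - θ + θ * ts)) -
        -((te - 1) * (te - 1)) / ((1 - θ + θ * te) * (1 - θ + θ * te))))

end aux

private lemma affine_hasDerivAt (t x : ℝ) :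
    HasDerivAt (fun θ : ℝ => 1 - θ + θ * t) (t - 1) x := by
  have h : HasDerivAt (fun θ : ℝ => 1 - θ + θ * t) (0 - 1 + 1 * t) x :=
    ((hasDerivAt_const x 1).sub (hasDerivAt_id x)).add ((hasDerivAt_id x).mul_const t)
  simpa using h.congr_deriv (by ring)

private lemma g_hasDerivAt (ts te : ℝ) (hte : 0 < te) (hts : te < ts) {x : ℝ}
    (hx : x ∈ Ioo (0:ℝ) 1) : HasDerivAt (gAux ts te) (g1Aux ts te x) x := by
  obtain ⟨hx0, hx1⟩ := hx
  have hA : (0:ℝ) < 1 - x + x * ts := by nlinarith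
  have hB : (0:ℝ) < 1 - x + x * te := by nlinarith
  have hlogA : HasDerivAt (fun θ : ℝ => Real.log (1 - θ + θ * ts))
      ((ts - 1) / (1 - x + x * ts)) x := (affine_hasDerivAt ts x).log hA.ne'
  have hlogB : HasDerivAt (fun θ : ℝ => Real.log (1 - θ + θ * te))
      ((te - 1) / (1 - x + x * te)) x := (affine_hasDerivAt te x).log hB.ne'
  have h1 : HasDerivAt (fun θ : ℝ => 1 - θ) (-1) x := by
    simpa using (hasDerivAt_id' x).const_sub (1:ℝ)
  exact h1.mul (hlogA.sub hlogB)

private lemma g1_hasDerivAt (ts te : ℝ) (hte : 0 < te) (hts : te < ts) {x : ℝ}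
    (hx : x ∈ Ioo (0:ℝ) 1) : HasDerivAt (g1Aux ts te) (g2Aux ts te x) x := by
  obtain ⟨hx0, hx1⟩ := hx
  have hA : (0:ℝ) < 1 - x + x * ts := by nlinarith
  have hB : (0:ℝ) < 1 - x + x * te := by nlinarith
  have hlogA : HasDerivAt (fun θ : ℝ => Real.log (1 - θ + θ * ts))
      ((ts - 1) / (1 - x + x * ts)) x := (affine_hasDerivAt ts x).log hA.ne'
  have hlogB : HasDerivAt (fun θ : ℝ => Real.log (1 - θ + θ * te))
      ((te - 1) / (1 - x + x * te)) x := (affine_hasDerivAt te x).log hB.ne'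
  have h1 : HasDerivAt (fun θ : ℝ => 1 - θ) (-1) x := by
    simpa using (hasDerivAt_id' x).const_sub (1:ℝ)
  have hfracA : HasDerivAt (fun θ : ℝ => (ts - 1) / (1 - θ + θ * ts))
      (-((ts - 1) * (ts - 1)) / ((1 - x + x * ts) * (1 - x + x * ts))) x := by
    have := (hasDerivAt_const x (ts - 1)).div (affine_hasDerivAt ts x) hA.ne'
    refine this.congr_deriv (by ring)
  have hfracB : HasDerivAt (fun θ : ℝ => (te - 1) / (1 - θ + θ * te))
      (-((te - 1) * (te - 1)) / ((1 - x + x * te) * (1 - x + x * te))) x := by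
    have := (hasDerivAt_const x (te - 1)).div (affine_hasDerivAt te x) hB.ne'
    refine this.congr_deriv (by ring)
  have h := ((hasDerivAt_const x (-1:ℝ)).mul (hlogA.sub hlogB)).add
    (h1.mul (hfracA.sub hfracB))
  exact h.congr_deriv (by unfold g2Aux; simp only [Pi.sub_apply]; ring)

private lemma g2_nonpos (ts te : ℝ) (hte : 0 < te) (hts : te < ts) {x : ℝ}
    (hx : x ∈ Ioo (0:ℝ) 1) : g2Aux ts te x ≤ 0 := by
  obtain ⟨hx0, hx1⟩ := hx
  have hA : (0:ℝ) < 1 - x + x * ts := by nlinarith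
  have hB : (0:ℝ) < 1 - x + x * te := by nlinarith
  have key : g2Aux ts te x =
      -((ts - te) * ((1 - x + x * te) * ts + (1 - x + x * ts) * te)) /
        ((1 - x + x * ts) ^ 2 * (1 - x + x * te) ^ 2) := by
    unfold g2Aux
    generalize hAe : 1 - x + x * ts = A at hA ⊢
    generalize hBe : 1 - x + x * te = B at hB ⊢
    field_simp
    rw [← hAe, ← hBe]
    ring
  rw [key]
  apply div_nonpos_of_nonpos_of_nonneg
  · have hts0 : 0 < ts := lt_trans hte hts
    have h1 : 0 < (1 - x + x * te) * ts + (1 - x + x * ts) * te := by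
      nlinarith [mul_pos hB hts0, mul_pos hA hte]
    nlinarith
  · positivity

private lemma g_concave (ts te : ℝ) (hte : 0 < te) (hts : te < ts) :
    ConcaveOn ℝ (Set.Ioo (0:ℝ) 1) (gAux ts te) := by
  have hint : interior (Ioo (0:ℝ) 1) = Ioo (0:ℝ) 1 := interior_Ioo
  refine concaveOn_of_hasDerivWithinAt2_nonpos (f' := g1Aux ts te) (f'' := g2Aux ts te)
      (convex_Ioo 0 1) ?_ ?_ ?_ ?_
  · intro x hx
    exact (g_hasDerivAt ts te hte hts hx).continuousAt.continuousWithinAt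
  · intro x hx
    rw [hint] at hx
    exact (g_hasDerivAt ts te hte hts hx).hasDerivWithinAt
  · intro x hx
    rw [hint] at hx
    exact (g1_hasDerivAt ts te hte hts hx).hasDerivWithinAt
  · intro x hx
    rw [hint] at hx
    exact g2_nonpos ts te hte hts hx

/-- The secrecy rate `f(θ) = (1−θ)·log₂((1−θ+θ·tₛ)/(1−θ+θ·tₑ))` is concave on `(0,1)`
whenever `tₛ > tₑ > 0`. -/
theorem stmt2 (ts te : ℝ) (hte : 0 < te) (hts : te < ts) :
    ConcaveOn ℝ (Set.Ioo (0:ℝ) 1)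
      (fun θ : ℝ => (1 - θ) * Real.logb 2 ((1 - θ + θ * ts) / (1 - θ + θ * te))) := by
  have hlog2 : (0:ℝ) < Real.log 2 := Real.log_pos (by norm_num)
  have hc : ConcaveOn ℝ (Set.Ioo (0:ℝ) 1)
      (fun θ : ℝ => (Real.log 2)⁻¹ • gAux ts te θ) :=
    (g_concave ts te hte hts).smul (by positivity)
  refine hc.congr fun x hx => ?_
  obtain ⟨hx0, hx1⟩ := hx
  have hA : (0:ℝ) < 1 - x + x * ts := by nlinarith
  have hB : (0:ℝ) < 1 - x + x * te := by nlinarith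
  simp only [gAux, smul_eq_mul, Real.logb, Real.log_div hA.ne' hB.ne']
  ring
end

section
/- Let t > 0 be a real constant. Then the function h(z) = z·log₂( (t + (1−t)·z) / z ) is concave on the open interval (0,1), and strictly concave if t ≠ 1. -/
/-- For `t > 0`, the function `h(z) = z·log₂((t+(1−t)z)/z)` is concave on `(0,1)`,
and strictly concave if `t ≠ 1`. -/
theorem stmt3 (t : ℝ) (ht : 0 < t) :
    ConcaveOn ℝ (Set.Ioo (0:ℝ) 1)
      (fun z : ℝ => z * Real.logb 2 ((t + (1 - t) * z) / z)) ∧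
    (t ≠ 1 → StrictConcaveOn ℝ (Set.Ioo (0:ℝ) 1)
      (fun z : ℝ => z * Real.logb 2 ((t + (1 - t) * z) / z))) := by
  have hc : (0:ℝ) < Real.log 2 := Real.log_pos one_lt_two
  have hfun : (fun z : ℝ => z * Real.logb 2 ((t + (1 - t) * z) / z))
      = fun z : ℝ => z * Real.log ((t + (1 - t) * z) / z) / Real.log 2 := by
    funext z; rw [Real.logb]; ring
  rw [hfun]
  set f : ℝ → ℝ := fun z => z * Real.log ((t + (1 - t) * z) / z) / Real.log 2 with hf
  set d1 : ℝ → ℝ := fun x =>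
    (Real.log ((t + (1 - t) * x) / x) - t / (t + (1 - t) * x)) / Real.log 2 with hd1
  have hu : ∀ x ∈ Set.Ioo (0:ℝ) 1, 0 < t + (1 - t) * x := by
    intro x hx
    nlinarith [hx.1, hx.2, mul_pos ht (sub_pos.2 hx.2)]
  have hD1 : ∀ x ∈ Set.Ioo (0:ℝ) 1, HasDerivAt f (d1 x) x := by
    intro x hx
    obtain ⟨hx0, hx1⟩ := hx
    have hux := hu x ⟨hx0, hx1⟩
    have hU : HasDerivAt (fun z : ℝ => t + (1 - t) * z) (1 - t) x := by
      simpa using ((hasDerivAt_id x).const_mul (1 - t)).const_add t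
    have hQ : HasDerivAt (fun z : ℝ => (t + (1 - t) * z) / z) (-t / x ^ 2) x := by
      have h := hU.div (hasDerivAt_id x) hx0.ne'
      refine h.congr_deriv (Eq.symm ?_)
      simp only [id_eq]
      ring
    have hq : (t + (1 - t) * x) / x ≠ 0 := ne_of_gt (div_pos hux hx0)
    have hL : HasDerivAt (fun z : ℝ => Real.log ((t + (1 - t) * z) / z))
        ((-t / x ^ 2) / ((t + (1 - t) * x) / x)) x := hQ.log hq
    have h := ((hasDerivAt_id x).mul hL).div_const (Real.log 2)
    refine h.congr_deriv (Eq.symm ?_)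
    simp only [hd1, id_eq]
    rw [div_eq_div_iff hc.ne' hc.ne']
    field_simp
    ring
  have hD2 : ∀ x ∈ Set.Ioo (0:ℝ) 1,
      HasDerivAt d1 ((-(t ^ 2) / (x * (t + (1 - t) * x) ^ 2)) / Real.log 2) x := by
    intro x hx
    obtain ⟨hx0, hx1⟩ := hx
    have hux := hu x ⟨hx0, hx1⟩
    have hU : HasDerivAt (fun z : ℝ => t + (1 - t) * z) (1 - t) x := by
      simpa using ((hasDerivAt_id x).const_mul (1 - t)).const_add t
    have hQ : HasDerivAt (fun z : ℝ => (t + (1 - t) * z) / z) (-t / x ^ 2) x := by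
      have h := hU.div (hasDerivAt_id x) hx0.ne'
      refine h.congr_deriv (Eq.symm ?_)
      simp only [id_eq]
      ring
    have hq : (t + (1 - t) * x) / x ≠ 0 := ne_of_gt (div_pos hux hx0)
    have hL : HasDerivAt (fun z : ℝ => Real.log ((t + (1 - t) * z) / z))
        ((-t / x ^ 2) / ((t + (1 - t) * x) / x)) x := hQ.log hq
    have hT : HasDerivAt (fun z : ℝ => t / (t + (1 - t) * z))
        ((0 * (t + (1 - t) * x) - t * (1 - t)) / (t + (1 - t) * x) ^ 2) x :=
      (hasDerivAt_const x t).div hU hux.ne'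
    have h := (hL.sub hT).div_const (Real.log 2)
    refine h.congr_deriv (Eq.symm ?_)
    rw [div_eq_div_iff hc.ne' hc.ne']
    field_simp
    ring
  have key : StrictConcaveOn ℝ (Set.Ioo (0:ℝ) 1) f := by
    apply strictConcaveOn_of_deriv2_neg (convex_Ioo 0 1)
    · exact fun x hx => (hD1 x hx).continuousAt.continuousWithinAt
    · intro x hx
      rw [interior_Ioo] at hx
      have hux := hu x hx
      have hev : deriv f =ᶠ[nhds x] d1 := by
        filter_upwards [isOpen_Ioo.mem_nhds hx] with y hy using (hD1 y hy).deriv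
      have : deriv (deriv f) x = (-(t ^ 2) / (x * (t + (1 - t) * x) ^ 2)) / Real.log 2 := by
        rw [hev.deriv_eq, (hD2 x hx).deriv]
      simp only [Function.iterate_succ, Function.iterate_zero, Function.comp_apply, id_eq]
      rw [this]
      have hpos : 0 < t ^ 2 / (x * (t + (1 - t) * x) ^ 2) / Real.log 2 := by
        have := hx.1
        positivity
      rw [neg_div, neg_div]
      linarith
  exact ⟨key.concaveOn, fun _ => key⟩
end

section
/- Let R̄ > 0, and for k = 1,…,K and l = 1,…,L let t_{s,k} > t_{e,l} > 0 be real constants (for every pair (k,l)). Then the set Θ = { θ ∈ (0,1) : (1−θ)·log₂( (1−θ+θ·t_{s,k}) / (1−θ+θ·t_{e,l}) ) ≥ R̄ for all k, l } is a convex subset of ℝ, and for every constant c > 0 the objective θ ↦ c·θ/(1−θ) is convex on (0,1). Hence the outer-level time-allocation problem of minimizing c·θ/(1−θ) over Θ is a convex optimization problem. -/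
open Set

private lemma concaveOn_congr' {s : Set ℝ} {f g : ℝ → ℝ} (h : ConcaveOn ℝ s f)
    (he : ∀ x ∈ s, f x = g x) : ConcaveOn ℝ s g := by
  refine ⟨h.1, fun x hx y hy a b ha hb hab => ?_⟩
  rw [← he _ (h.1 hx hy ha hb hab), ← he x hx, ← he y hy]
  exact h.2 hx hy ha hb hab

private lemma concaveF (a b : ℝ) (hb : 0 < b) (hab : b < a) :
    ConcaveOn ℝ (Set.Ioo (0:ℝ) 1)
      (fun θ : ℝ => (1 - θ) * (Real.log (1 - θ + θ * a) - Real.log (1 - θ + θ * b))) := by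
  have ha : 0 < a := hb.trans hab
  set F : ℝ → ℝ := fun θ => (1 - θ) * (Real.log (1 - θ + θ * a) - Real.log (1 - θ + θ * b)) with hF
  set F' : ℝ → ℝ := fun θ => -(Real.log (1 - θ + θ * a) - Real.log (1 - θ + θ * b))
      + (1 - θ) * ((a - 1) / (1 - θ + θ * a) - (b - 1) / (1 - θ + θ * b)) with hF'
  set F'' : ℝ → ℝ := fun θ => -2 * ((a - 1) / (1 - θ + θ * a) - (b - 1) / (1 - θ + θ * b))
      + (1 - θ) * ((b - 1) ^ 2 / (1 - θ + θ * b) ^ 2 - (a - 1) ^ 2 / (1 - θ + θ * a) ^ 2) with hF''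
  have hApos : ∀ x ∈ Set.Ioo (0:ℝ) 1, 0 < 1 - x + x * a := by
    intro x hx
    have := hx.1; have := hx.2
    nlinarith
  have hBpos : ∀ x ∈ Set.Ioo (0:ℝ) 1, 0 < 1 - x + x * b := by
    intro x hx
    have := hx.1; have := hx.2
    nlinarith
  have hd1 : ∀ x ∈ Set.Ioo (0:ℝ) 1, HasDerivAt F (F' x) x := by
    intro x hx
    have hA := hApos x hx
    have hB := hBpos x hx
    have hlin : HasDerivAt (fun θ : ℝ => 1 - θ) (-1) x := by
      simpa [Pi.sub_def] using (hasDerivAt_const x (1:ℝ)).sub (hasDerivAt_id x)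
    have hAa : HasDerivAt (fun θ : ℝ => 1 - θ + θ * a) (a - 1) x := by
      have := hlin.add ((hasDerivAt_id x).mul_const a)
      simpa [add_comm, sub_eq_add_neg, Pi.add_def] using this.congr_deriv (by ring)
    have hBb : HasDerivAt (fun θ : ℝ => 1 - θ + θ * b) (b - 1) x := by
      have := hlin.add ((hasDerivAt_id x).mul_const b)
      simpa [Pi.add_def] using this.congr_deriv (by ring)
    have hlogA : HasDerivAt (fun θ : ℝ => Real.log (1 - θ + θ * a)) ((a - 1) / (1 - x + x * a)) x := by
      simpa [div_eq_mul_inv, mul_comm] using hAa.log hA.ne'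
    have hlogB : HasDerivAt (fun θ : ℝ => Real.log (1 - θ + θ * b)) ((b - 1) / (1 - x + x * b)) x := by
      simpa [div_eq_mul_inv, mul_comm] using hBb.log hB.ne'
    have := hlin.mul (hlogA.sub hlogB)
    refine this.congr_deriv ?_
    simp only [hF', Pi.sub_apply]
    ring
  have hd2 : ∀ x ∈ Set.Ioo (0:ℝ) 1, HasDerivAt F' (F'' x) x := by
    intro x hx
    have hA := hApos x hx
    have hB := hBpos x hx
    have hlin : HasDerivAt (fun θ : ℝ => 1 - θ) (-1) x := by
      simpa [Pi.sub_def] using (hasDerivAt_const x (1:ℝ)).sub (hasDerivAt_id x)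
    have hAa : HasDerivAt (fun θ : ℝ => 1 - θ + θ * a) (a - 1) x := by
      have := hlin.add ((hasDerivAt_id x).mul_const a)
      simpa [Pi.add_def] using this.congr_deriv (by ring)
    have hBb : HasDerivAt (fun θ : ℝ => 1 - θ + θ * b) (b - 1) x := by
      have := hlin.add ((hasDerivAt_id x).mul_const b)
      simpa [Pi.add_def] using this.congr_deriv (by ring)
    have hlogA : HasDerivAt (fun θ : ℝ => Real.log (1 - θ + θ * a)) ((a - 1) / (1 - x + x * a)) x := by
      simpa [div_eq_mul_inv, mul_comm] using hAa.log hA.ne'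
    have hlogB : HasDerivAt (fun θ : ℝ => Real.log (1 - θ + θ * b)) ((b - 1) / (1 - x + x * b)) x := by
      simpa [div_eq_mul_inv, mul_comm] using hBb.log hB.ne'
    have hinvA : HasDerivAt (fun θ : ℝ => (a - 1) / (1 - θ + θ * a))
        (-((a - 1) ^ 2 / (1 - x + x * a) ^ 2)) x := by
      have := (hAa.inv hA.ne').const_mul (a - 1)
      refine this.congr_deriv ?_
      field_simp
    have hinvB : HasDerivAt (fun θ : ℝ => (b - 1) / (1 - θ + θ * b))
        (-((b - 1) ^ 2 / (1 - x + x * b) ^ 2)) x := by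
      have := (hBb.inv hB.ne').const_mul (b - 1)
      refine this.congr_deriv ?_
      field_simp
    have h1 := ((hlogA.sub hlogB).neg).add (hlin.mul (hinvA.sub hinvB))
    refine h1.congr_deriv ?_
    simp only [hF'', Pi.sub_apply, Pi.neg_apply]
    ring
  have hint : interior (Set.Ioo (0:ℝ) 1) = Set.Ioo (0:ℝ) 1 := interior_Ioo
  refine concaveOn_of_hasDerivWithinAt2_nonpos (f := F) (f' := F') (f'' := F'') (convex_Ioo (0:ℝ) 1)
    (fun x hx => ((hd1 x hx).continuousAt).continuousWithinAt)
    (fun x hx => ?_) (fun x hx => ?_) (fun x hx => ?_)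
  · rw [hint] at hx ⊢; exact (hd1 x hx).hasDerivWithinAt
  · rw [hint] at hx ⊢; exact (hd2 x hx).hasDerivWithinAt
  · rw [hint] at hx
    have hA := hApos x hx
    have hB := hBpos x hx
    have key : F'' x = -((a - b) * (a * (1 - x + x * b) + b * (1 - x + x * a)))
        / ((1 - x + x * a) ^ 2 * (1 - x + x * b) ^ 2) := by
      simp only [hF'']
      have : 1 - x + a * x ≠ 0 := by linarith
      have : 1 - x + b * x ≠ 0 := by linarith
      field_simp
      ring
    rw [key]
    apply div_nonpos_of_nonpos_of_nonneg
    · have : 0 < (a - b) * (a * (1 - x + x * b) + b * (1 - x + x * a)) := by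
        apply mul_pos (by linarith)
        positivity
      linarith
    · positivity

/-- The outer-level time-allocation problem is convex: the feasible set
`Θ = {θ ∈ (0,1) : (1−θ)·log₂((1−θ+θ·t_{s,k})/(1−θ+θ·t_{e,l})) ≥ R̄ for all k,l}`
is convex, and for every `c > 0` the objective `θ ↦ c·θ/(1−θ)` is convex on `(0,1)`. -/
theorem stmt5 {K L : ℕ} (R : ℝ) (hR : 0 < R) (ts : Fin K → ℝ) (te : Fin L → ℝ)
    (hte : ∀ l, 0 < te l) (hstse : ∀ k l, te l < ts k)
    (Θ : Set ℝ)
    (hΘ : Θ = {θ : ℝ | θ ∈ Set.Ioo (0:ℝ) 1 ∧ ∀ k l,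
      R ≤ (1 - θ) * Real.logb 2 ((1 - θ + θ * ts k) / (1 - θ + θ * te l))}) :
    Convex ℝ Θ ∧
      ∀ c : ℝ, 0 < c →
        ConvexOn ℝ (Set.Ioo (0:ℝ) 1) (fun θ : ℝ => c * θ / (1 - θ)) := by
  constructor
  · -- convexity of the feasible set
    subst hΘ
    have hconc : ∀ (k : Fin K) (l : Fin L), ConcaveOn ℝ (Set.Ioo (0:ℝ) 1)
        (fun θ : ℝ => (1 - θ) * Real.logb 2 ((1 - θ + θ * ts k) / (1 - θ + θ * te l))) := by
      intro k l
      have hb := hte l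
      have hab := hstse k l
      have hF := concaveF (ts k) (te l) hb hab
      have hsm := hF.smul (c := (Real.log 2)⁻¹)
        (by positivity)
      refine concaveOn_congr' hsm ?_
      intro x hx
      have hA : 0 < 1 - x + x * ts k := by nlinarith [hx.1, hx.2, hb.trans hab]
      have hB : 0 < 1 - x + x * te l := by nlinarith [hx.1, hx.2, hb]
      simp only [Pi.smul_apply, smul_eq_mul]
      rw [Real.logb, Real.log_div hA.ne' hB.ne']
      ring
    have hset : {θ : ℝ | θ ∈ Set.Ioo (0:ℝ) 1 ∧ ∀ k l,
        R ≤ (1 - θ) * Real.logb 2 ((1 - θ + θ * ts k) / (1 - θ + θ * te l))}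
        = Set.Ioo (0:ℝ) 1 ∩ ⋂ (k : Fin K), ⋂ (l : Fin L),
          {θ ∈ Set.Ioo (0:ℝ) 1 |
            R ≤ (1 - θ) * Real.logb 2 ((1 - θ + θ * ts k) / (1 - θ + θ * te l))} := by
      ext θ
      simp only [Set.mem_setOf_eq, Set.mem_inter_iff, Set.mem_iInter]
      exact ⟨fun ⟨h1, h2⟩ => ⟨h1, fun k l => ⟨h1, h2 k l⟩⟩,
        fun ⟨h1, h2⟩ => ⟨h1, fun k l => (h2 k l).2⟩⟩
    rw [hset]
    exact (convex_Ioo 0 1).inter (convex_iInter fun k => convex_iInter fun l =>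
      (hconc k l).convex_ge R)
  · -- convexity of the objective
    intro c hc
    set f' : ℝ → ℝ := fun x => c / (1 - x) ^ 2 with hf'
    set f'' : ℝ → ℝ := fun x => 2 * c / (1 - x) ^ 3 with hf''
    have hd1 : ∀ x ∈ Set.Ioo (0:ℝ) 1, HasDerivAt (fun θ : ℝ => c * θ / (1 - θ)) (f' x) x := by
      intro x hx
      have h1x : (0:ℝ) < 1 - x := by linarith [hx.2]
      have hlin : HasDerivAt (fun θ : ℝ => 1 - θ) (-1) x := by
        simpa [Pi.sub_def] using (hasDerivAt_const x (1:ℝ)).sub (hasDerivAt_id x)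
      have := ((hasDerivAt_id x).const_mul c).mul (hlin.inv h1x.ne')
      have h2 : HasDerivAt (fun θ : ℝ => c * θ * (1 - θ)⁻¹) (f' x) x := by
        refine this.congr_deriv ?_
        simp only [hf', Pi.inv_apply, id]
        field_simp
        ring
      simpa [div_eq_mul_inv] using h2
    have hd2 : ∀ x ∈ Set.Ioo (0:ℝ) 1, HasDerivAt f' (f'' x) x := by
      intro x hx
      have h1x : (0:ℝ) < 1 - x := by linarith [hx.2]
      have hlin : HasDerivAt (fun θ : ℝ => 1 - θ) (-1) x := by
        simpa [Pi.sub_def] using (hasDerivAt_const x (1:ℝ)).sub (hasDerivAt_id x)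
      have hp : HasDerivAt (fun θ : ℝ => (1 - θ) ^ 2) (2 * (1 - x) ^ 1 * -1) x := hlin.pow 2
      have := (hp.inv (by positivity)).const_mul c
      refine this.congr_deriv ?_
      simp only [hf'']
      field_simp
    have hint : interior (Set.Ioo (0:ℝ) 1) = Set.Ioo (0:ℝ) 1 := interior_Ioo
    refine convexOn_of_hasDerivWithinAt2_nonneg (f' := f') (f'' := f'') (convex_Ioo (0:ℝ) 1)
      (fun x hx => ((hd1 x hx).continuousAt).continuousWithinAt)
      (fun x hx => ?_) (fun x hx => ?_) (fun x hx => ?_)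
    · rw [hint] at hx ⊢; exact (hd1 x hx).hasDerivWithinAt
    · rw [hint] at hx ⊢; exact (hd2 x hx).hasDerivWithinAt
    · rw [hint] at hx
      have h1x : (0:ℝ) < 1 - x := by linarith [hx.2]
      simp only [hf'']
      positivity
end

section
/- Let h_s, h_e ∈ ℂⁿ, σ_s, σ_e > 0 and R > 0. Define the Hermitian matrix A = (1/σ_s²)·h_s h_s* − (2^R/σ_e²)·h_e h_e*, and assume its largest eigenvalue λ_max(A) is positive. Then the infimum of ‖w‖² over all w ∈ ℂⁿ satisfying |h_s* w|²/σ_s² − 2^R·|h_e* w|²/σ_e² ≥ 2^R − 1 equals (2^R − 1)/λ_max(A), and it is attained at w_opt = √((2^R − 1)/λ_max(A)) · v, where v is any unit-norm eigenvector of A associated with λ_max(A). -/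
open Matrix

private theorem stmt7_dot_self_eq {n : ℕ} (x : Fin n → ℂ) :
    dotProduct (star x) x = ((∑ i, ‖x i‖ ^ 2 : ℝ) : ℂ) := by
  simp only [dotProduct, Pi.star_apply, RCLike.star_def, Complex.ofReal_sum]
  apply Finset.sum_congr rfl; intro j _
  rw [Complex.conj_mul']
  norm_cast

private theorem stmt7_quadform_re {n : ℕ} (hs he : Fin n → ℂ) (σs σe R : ℝ)
    (A : Matrix (Fin n) (Fin n) ℂ)
    (hAdef : A = ((σs ^ 2)⁻¹ : ℝ) • Matrix.vecMulVec hs (star hs)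
      - (((2:ℝ) ^ R / σe ^ 2 : ℝ)) • Matrix.vecMulVec he (star he))
    (hσs : 0 < σs) (hσe : 0 < σe)
    (w : Fin n → ℂ) :
    (star w ⬝ᵥ A *ᵥ w).re = ‖dotProduct (star hs) w‖ ^ 2 / σs ^ 2
            - (2:ℝ) ^ R * (‖dotProduct (star he) w‖ ^ 2 / σe ^ 2) := by
  have key : ∀ (a : Fin n → ℂ), star w ⬝ᵥ (vecMulVec a (star a) *ᵥ w)
      = (‖dotProduct (star a) w‖ ^ 2 : ℝ) := by
    intro a
    have h1 : vecMulVec a (star a) *ᵥ w = (dotProduct (star a) w) • a := by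
      ext i
      simp only [vecMulVec, Matrix.mulVec, dotProduct, Pi.star_apply, Pi.smul_apply,
        Matrix.of_apply, smul_eq_mul, Finset.sum_mul, Finset.mul_sum, RCLike.star_def]
      apply Finset.sum_congr rfl; intro j _; ring
    have h2 : star w ⬝ᵥ a = starRingEnd ℂ (dotProduct (star a) w) := by
      simp only [dotProduct, map_sum, Pi.star_apply, RCLike.star_def]
      apply Finset.sum_congr rfl; intro j _
      rw [RingHom.map_mul, Complex.conj_conj]; ring
    rw [h1, dotProduct_smul, h2, smul_eq_mul, Complex.mul_conj, Complex.normSq_eq_norm_sq]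
  rw [hAdef]
  simp only [Matrix.sub_mulVec, Matrix.smul_mulVec, dotProduct_sub, dotProduct_smul,
    key hs, key he, Complex.sub_re, Complex.real_smul, ← Complex.ofReal_mul,
    Complex.ofReal_re]
  field_simp

private theorem stmt7_rayleigh_le {n : ℕ} (A : Matrix (Fin n) (Fin n) ℂ) (hA : A.IsHermitian)
    (lmax : ℝ) (hl : ∀ i, hA.eigenvalues i ≤ lmax) (w : Fin n → ℂ) :
    (star w ⬝ᵥ A *ᵥ w).re ≤ lmax * ∑ i, ‖w i‖ ^ 2 := by
  set U : Matrix (Fin n) (Fin n) ℂ := (hA.eigenvectorUnitary : Matrix (Fin n) (Fin n) ℂ) with hU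
  set D : Matrix (Fin n) (Fin n) ℂ := diagonal (RCLike.ofReal ∘ hA.eigenvalues) with hD
  set u : Fin n → ℂ := star U *ᵥ w with hu
  have hstaru : star u = star w ᵥ* U := by
    rw [hu, Matrix.star_mulVec]
    rw [← Matrix.star_eq_conjTranspose, star_star]
  have h1 : star w ⬝ᵥ A *ᵥ w = star u ⬝ᵥ D *ᵥ u := by
    conv_lhs => rw [hA.spectral_theorem, Unitary.conjStarAlgAut_apply]
    rw [← hU, ← hD, ← Matrix.mulVec_mulVec, ← Matrix.mulVec_mulVec,
      Matrix.dotProduct_mulVec (star w) U, ← hstaru]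
  have h2 : star u ⬝ᵥ D *ᵥ u = ((∑ i, hA.eigenvalues i * ‖u i‖ ^ 2 : ℝ) : ℂ) := by
    simp only [hD, dotProduct, Matrix.mulVec_diagonal, Pi.star_apply,
      RCLike.star_def, Complex.ofReal_sum, Function.comp_apply]
    apply Finset.sum_congr rfl; intro j _
    rw [show (starRingEnd ℂ) (u j) * ((RCLike.ofReal (hA.eigenvalues j) : ℂ) * u j)
        = (RCLike.ofReal (hA.eigenvalues j) : ℂ) * ((starRingEnd ℂ) (u j) * u j) by ring,
      Complex.conj_mul']
    norm_cast
    push_cast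
    rfl
  have h3 : ∑ i, ‖u i‖ ^ 2 = ∑ i, ‖w i‖ ^ 2 := by
    have hd : dotProduct (star u) u = dotProduct (star w) w := by
      rw [hstaru, hu, Matrix.dotProduct_mulVec, Matrix.vecMul_vecMul]
      have : star w ᵥ* (U * star U) = star w := by
        rw [(Matrix.mem_unitaryGroup_iff).mp hA.eigenvectorUnitary.2, Matrix.vecMul_one]
      rw [this]
    have e1 := stmt7_dot_self_eq u
    have e2 := stmt7_dot_self_eq w
    rw [e1, e2] at hd
    exact_mod_cast hd
  rw [h1, h2, Complex.ofReal_re, ← h3]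
  calc ∑ i, hA.eigenvalues i * ‖u i‖ ^ 2 ≤ ∑ i, lmax * ‖u i‖ ^ 2 := by
        apply Finset.sum_le_sum; intro i _
        exact mul_le_mul_of_nonneg_right (hl i) (by positivity)
    _ = lmax * ∑ i, ‖u i‖ ^ 2 := by rw [Finset.mul_sum]

/-- Closed-form power-minimization solution for the single-user single-eavesdropper
case: with `A = (1/σₛ²) hₛ hₛ* − (2^R/σₑ²) hₑ hₑ*` Hermitian with positive largest
eigenvalue `λmax`, the infimum of `‖w‖²` over all `w` with
`|hₛ* w|²/σₛ² − 2^R |hₑ* w|²/σₑ² ≥ 2^R − 1` equals `(2^R − 1)/λmax`, attained at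
`w_opt = √((2^R−1)/λmax) · v` for any unit-norm eigenvector `v` of `λmax`. -/
theorem stmt7 {n : ℕ} (hs he : Fin n → ℂ) (σs σe R : ℝ)
    (hσs : 0 < σs) (hσe : 0 < σe) (hR : 0 < R)
    (A : Matrix (Fin n) (Fin n) ℂ)
    (hAdef : A = ((σs ^ 2)⁻¹ : ℝ) • Matrix.vecMulVec hs (star hs)
      - (((2:ℝ) ^ R / σe ^ 2 : ℝ)) • Matrix.vecMulVec he (star he))
    (hA : A.IsHermitian)
    (lmax : ℝ) (hlmax : IsGreatest (Set.range hA.eigenvalues) lmax) (hpos : 0 < lmax)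
    (v : Fin n → ℂ) (hv : A.mulVec v = (lmax : ℂ) • v) (hvnorm : ∑ i, ‖v i‖ ^ 2 = 1)
    (wopt : Fin n → ℂ)
    (hwopt : wopt = (Real.sqrt (((2:ℝ) ^ R - 1) / lmax) : ℂ) • v) :
    (∀ w : Fin n → ℂ,
        (2:ℝ) ^ R - 1 ≤ ‖dotProduct (star hs) w‖ ^ 2 / σs ^ 2
            - (2:ℝ) ^ R * (‖dotProduct (star he) w‖ ^ 2 / σe ^ 2) →
        ((2:ℝ) ^ R - 1) / lmax ≤ ∑ i, ‖w i‖ ^ 2) ∧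
    ((2:ℝ) ^ R - 1 ≤ ‖dotProduct (star hs) wopt‖ ^ 2 / σs ^ 2
        - (2:ℝ) ^ R * (‖dotProduct (star he) wopt‖ ^ 2 / σe ^ 2)) ∧
    (∑ i, ‖wopt i‖ ^ 2 = ((2:ℝ) ^ R - 1) / lmax) := by
  have hpow : (1:ℝ) < (2:ℝ) ^ R := by
    have := Real.rpow_lt_rpow_left_iff (x := (2:ℝ)) (y := 0) (z := R) (by norm_num)
    simpa using this.mpr hR
  set q : ℝ := ((2:ℝ) ^ R - 1) / lmax with hqdef
  have hq : 0 ≤ q := by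
    apply div_nonneg (by linarith) hpos.le
  have hql : q * lmax = (2:ℝ) ^ R - 1 := div_mul_cancel₀ _ (ne_of_gt hpos)
  -- quadratic form at wopt
  have hqf : (star wopt ⬝ᵥ A *ᵥ wopt).re = (2:ℝ) ^ R - 1 := by
    have hst : star ((Real.sqrt q : ℂ) • v) = (Real.sqrt q : ℂ) • star v := by
      ext i
      simp [Complex.conj_ofReal]
    rw [hwopt, Matrix.mulVec_smul, hv, hst, smul_dotProduct, dotProduct_smul,
      dotProduct_smul, stmt7_dot_self_eq v, hvnorm]
    simp only [smul_eq_mul, Complex.ofReal_one, mul_one]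
    rw [show ((Real.sqrt q : ℂ) * ((Real.sqrt q : ℂ) * (lmax:ℂ)))
        = (((Real.sqrt q * Real.sqrt q * lmax : ℝ)) : ℂ) by push_cast; ring,
      Real.mul_self_sqrt hq, Complex.ofReal_re, hql]
  refine ⟨?_, ?_, ?_⟩
  · intro w hw
    have hray := stmt7_rayleigh_le A hA lmax (fun i => hlmax.2 ⟨i, rfl⟩) w
    rw [stmt7_quadform_re hs he σs σe R A hAdef hσs hσe w] at hray
    rw [div_le_iff₀ hpos]
    nlinarith [hray, hw]
  · rw [← stmt7_quadform_re hs he σs σe R A hAdef hσs hσe wopt, hqf]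
  · rw [hwopt]
    have : ∀ i, ‖((Real.sqrt q : ℂ) • v) i‖ ^ 2 = q * ‖v i‖ ^ 2 := by
      intro i
      simp only [Pi.smul_apply, smul_eq_mul, norm_mul, mul_pow, Complex.norm_real]
      rw [Real.norm_eq_abs, abs_of_nonneg (Real.sqrt_nonneg q), Real.sq_sqrt hq]
    simp only [this, ← Finset.mul_sum, hvnorm, mul_one]
end

section
/- Let h_s, h_e ∈ ℂⁿ, σ_s, σ_e > 0, R̄ ∈ ℝ, w ∈ ℂⁿ, b ∈ ℝ and u = (u₁,u₂) ∈ ℝ². Put x = Re(w* h_s) and y = Im(w* h_s). If the linearized constraint ‖u‖² + 2·(u₁(x−u₁) + u₂(y−u₂)) ≥ b holds together with (2^R̄ − 1)·σ_s² + (2^R̄·σ_s²/σ_e²)·|w* h_e|² ≤ b, then the original secrecy constraint log₂(1 + |w* h_s|²/σ_s²) − log₂(1 + |w* h_e|²/σ_e²) ≥ R̄ holds. -/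
/-- Conservativeness of the SCA linearization: if the linearized constraint
`‖u‖² + 2⟨u,(x,y)−u⟩ ≥ b` (with `x = Re(w* hₛ)`, `y = Im(w* hₛ)`) and the
eavesdropper-side constraint `(2^R̄−1)σₛ² + (2^R̄σₛ²/σₑ²)|w* hₑ|² ≤ b` hold, then the
original secrecy-rate constraint holds. -/
theorem stmt12 {n : ℕ} (hs he : Fin n → ℂ) (σs σe : ℝ) (hσs : 0 < σs) (hσe : 0 < σe)
    (R : ℝ) (w : Fin n → ℂ) (b : ℝ) (u1 u2 : ℝ) (x y : ℝ)
    (hx : x = (dotProduct (star w) hs).re)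
    (hy : y = (dotProduct (star w) hs).im)
    (hlin : b ≤ u1 ^ 2 + u2 ^ 2 + 2 * (u1 * (x - u1) + u2 * (y - u2)))
    (heav : ((2:ℝ) ^ R - 1) * σs ^ 2
        + ((2:ℝ) ^ R * σs ^ 2 / σe ^ 2) * ‖dotProduct (star w) he‖ ^ 2 ≤ b) :
    R ≤ Real.logb 2 (1 + ‖dotProduct (star w) hs‖ ^ 2 / σs ^ 2)
        - Real.logb 2 (1 + ‖dotProduct (star w) he‖ ^ 2 / σe ^ 2) := by
  set A := ‖dotProduct (star w) hs‖ ^ 2 with hA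
  set B := ‖dotProduct (star w) he‖ ^ 2 with hB
  have hAxy : A = x ^ 2 + y ^ 2 := by
    rw [hA, hx, hy, Complex.sq_norm, Complex.normSq_apply]
    ring
  have hAb : b ≤ A := by
    have hsq : 0 ≤ (x - u1) ^ 2 + (y - u2) ^ 2 := by positivity
    nlinarith [hlin]
  have hBnn : (0:ℝ) ≤ B := by positivity
  have hRpos : (0:ℝ) < 2 ^ R := Real.rpow_pos_of_pos (by norm_num) R
  have hkey : (2:ℝ) ^ R * (1 + B / σe ^ 2) ≤ 1 + A / σs ^ 2 := by
    have hσs2 : (0:ℝ) < σs ^ 2 := by positivity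
    have hσe2 : (0:ℝ) < σe ^ 2 := by positivity
    have h1 : ((2:ℝ) ^ R - 1) * σs ^ 2
        + ((2:ℝ) ^ R * σs ^ 2 / σe ^ 2) * B ≤ A := le_trans heav hAb
    have hid : (2:ℝ) ^ R * (1 + B / σe ^ 2) * σs ^ 2
        = ((2:ℝ) ^ R - 1) * σs ^ 2 + ((2:ℝ) ^ R * σs ^ 2 / σe ^ 2) * B + σs ^ 2 := by
      field_simp; ring
    rw [show (1:ℝ) + A / σs ^ 2 = (σs ^ 2 + A) / σs ^ 2 by field_simp, le_div_iff₀ hσs2]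
    nlinarith [hid, h1]
  have h1pos : (0:ℝ) < 1 + B / σe ^ 2 := by positivity
  have h2pos : (0:ℝ) < 1 + A / σs ^ 2 := by positivity
  have hdiv : (2:ℝ) ^ R ≤ (1 + A / σs ^ 2) / (1 + B / σe ^ 2) := by
    rw [le_div_iff₀ h1pos]; exact hkey
  have := Real.logb_le_logb_of_le (b := 2) (by norm_num) hRpos hdiv
  rw [Real.logb_div (ne_of_gt h2pos) (ne_of_gt h1pos), Real.logb_rpow (by norm_num)] at this
  linarith
  norm_num
end

section
/- Fix positive reals σ̄_s, σ̄_e and R̄ > 0, and vectors h_{s,1},…,h_{s,K} and h_{e,1},…,h_{e,L} in ℂⁿ. Let S be the set of all n×n complex positive semidefinite matrices Q such that (1/σ̄_s²)·Re(h_{s,k}* Q h_{s,k}) − (2^R̄/σ̄_e²)·Re(h_{e,l}* Q h_{e,l}) ≥ 2^R̄ − 1 for all k = 1,…,K and l = 1,…,L. If S is nonempty and the infimum of trace over S is attained, then there exists an optimal solution Q* ∈ S (i.e., tr(Q*) = inf_{Q∈S} tr(Q)) whose rank satisfies rank(Q*) ≤ K and (rank(Q*))² ≤ K·L. -/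
open scoped ComplexOrder

open Matrix

namespace Stmt14Aux

variable {n r : ℕ}

lemma quad_form (V : Matrix (Fin n) (Fin r) ℂ) (M : Matrix (Fin r) (Fin r) ℂ)
    (x : Fin n → ℂ) :
    star x ⬝ᵥ ((V * M * Vᴴ) *ᵥ x) = star (Vᴴ *ᵥ x) ⬝ᵥ (M *ᵥ (Vᴴ *ᵥ x)) := by
  rw [star_mulVec, ← Matrix.mulVec_mulVec, ← Matrix.mulVec_mulVec,
    Matrix.dotProduct_mulVec, conjTranspose_conjTranspose]

lemma exists_factor {Q : Matrix (Fin n) (Fin n) ℂ} (hQ : Q.PosSemidef) :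
    ∃ V : Matrix (Fin n) (Fin Q.rank) ℂ, Q = V * Vᴴ ∧ ∀ w, V *ᵥ w = 0 → w = 0 := by
  classical
  have hH := hQ.isHermitian
  set lam : Fin n → ℝ := hH.eigenvalues with hlam
  have hlnn : ∀ i, 0 ≤ lam i := fun i => hQ.eigenvalues_nonneg i
  set U : Matrix (Fin n) (Fin n) ℂ :=
    (Matrix.IsHermitian.eigenvectorUnitary hH : Matrix (Fin n) (Fin n) ℂ) with hU
  have e : Fin Q.rank ≃ {i // lam i ≠ 0} :=
    Fintype.equivOfCardEq (by rw [Fintype.card_fin, hH.rank_eq_card_non_zero_eigs])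
  set V : Matrix (Fin n) (Fin Q.rank) ℂ :=
    Matrix.of (fun i c => U i (e c).1 * (Real.sqrt (lam (e c).1) : ℂ)) with hV
  have hsum : ∀ (g : Fin n → ℂ), (∀ a, lam a = 0 → g a = 0) →
      ∑ c : Fin Q.rank, g (e c).1 = ∑ a : Fin n, g a := by
    intro g hg
    rw [Equiv.sum_comp e (fun x => g x.1)]
    rw [← Finset.sum_subtype (Finset.univ.filter (fun a => lam a ≠ 0))
      (by simp) g]
    exact Finset.sum_filter_of_ne (fun x _ hx => by
      intro h0; exact hx (hg x h0))
  refine ⟨V, ?_, ?_⟩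
  · have hspec := hH.spectral_theorem
    ext i j
    have h1 : (V * Vᴴ) i j = ∑ c : Fin Q.rank,
        U i (e c).1 * (lam (e c).1 : ℂ) * star (U j (e c).1) := by
      simp only [Matrix.mul_apply, conjTranspose_apply, hV, Matrix.of_apply, star_mul',
        Complex.star_def, Complex.conj_ofReal]
      refine Finset.sum_congr rfl fun c _ => ?_
      have hsq : ((Real.sqrt (lam (e c).1) : ℝ) : ℂ) * ((Real.sqrt (lam (e c).1) : ℝ) : ℂ)
          = ((lam (e c).1 : ℝ) : ℂ) := by
        rw [← Complex.ofReal_mul, Real.mul_self_sqrt (hlnn _)]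
      linear_combination (U i (e c).1 * (starRingEnd ℂ) (U j (e c).1)) * hsq
    have h2 : Q i j = ∑ a : Fin n, U i a * (lam a : ℂ) * star (U j a) := by
      conv_lhs => rw [hspec, Unitary.conjStarAlgAut_apply]
      rw [Matrix.mul_apply]
      refine Finset.sum_congr rfl fun a _ => ?_
      rw [Matrix.mul_diagonal]
      simp [hU, Matrix.star_apply, mul_comm, hlam]
    rw [h1, h2]
    exact (hsum (fun a => U i a * (lam a : ℂ) * star (U j a))
      (fun a ha => by simp [ha])).symm
  · intro w hw
    set p : Fin n → ℂ := fun a =>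
      if h : lam a ≠ 0 then (Real.sqrt (lam a) : ℂ) * w (e.symm ⟨a, h⟩) else 0 with hp
    have hUp : U *ᵥ p = V *ᵥ w := by
      ext i
      simp only [Matrix.mulVec, dotProduct]
      rw [← hsum (fun a => U i a * p a) (fun a ha => by simp [hp, ha])]
      refine Finset.sum_congr rfl fun c _ => ?_
      have : p (e c).1 = (Real.sqrt (lam (e c).1) : ℂ) * w c := by
        rw [hp]; simp only [dif_pos (e c).2]
        congr 1
        rw [show (⟨(e c).1, (e c).2⟩ : {i // lam i ≠ 0}) = e c from rfl, Equiv.symm_apply_apply]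
      rw [this, hV]
      simp only [Matrix.of_apply]
      ring
    have hU1 : star U * U = 1 := by
      have := (Matrix.IsHermitian.eigenvectorUnitary hH).2
      exact (Matrix.mem_unitaryGroup_iff').mp this
    have hp0 : p = 0 := by
      have : (star U * U) *ᵥ p = star U *ᵥ (U *ᵥ p) := (Matrix.mulVec_mulVec _ _ _).symm
      rw [hU1, Matrix.one_mulVec, hUp, hw, Matrix.mulVec_zero] at this
      exact this
    ext c
    have := congrFun hp0 (e c).1
    rw [hp] at this
    simp only [dif_pos (e c).2] at this
    rw [show (⟨(e c).1, (e c).2⟩ : {i // lam i ≠ 0}) = e c from rfl,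
      Equiv.symm_apply_apply] at this
    have hpos : 0 < lam (e c).1 := lt_of_le_of_ne (hlnn _) (Ne.symm (e c).2)
    have hs : ((Real.sqrt (lam (e c).1) : ℝ) : ℂ) ≠ 0 := by
      simpa using (Real.sqrt_pos.mpr hpos).ne'
    simpa [Pi.zero_apply] using (mul_eq_zero.mp this).resolve_left hs


section Helpers
variable {r : ℕ}

lemma dp_self (z : Fin r → ℂ) :
    star z ⬝ᵥ z = ((∑ i, Complex.normSq (z i) : ℝ) : ℂ) := by
  simp only [dotProduct, Pi.star_apply, Complex.ofReal_sum]
  exact Finset.sum_congr rfl fun i _ => by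
    rw [Complex.star_def, Complex.normSq_eq_conj_mul_self]

lemma dp_self_re_nonneg (z : Fin r → ℂ) : 0 ≤ (star z ⬝ᵥ z).re := by
  rw [dp_self, Complex.ofReal_re]
  exact Finset.sum_nonneg fun i _ => Complex.normSq_nonneg _

lemma dp_self_re_pos {z : Fin r → ℂ} (hz : z ≠ 0) : 0 < (star z ⬝ᵥ z).re := by
  rw [dp_self, Complex.ofReal_re]
  obtain ⟨i, hi⟩ := Function.ne_iff.mp hz
  exact Finset.sum_pos' (fun j _ => Complex.normSq_nonneg _)
    ⟨i, Finset.mem_univ i, by simpa using Complex.normSq_pos.mpr hi⟩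

lemma conj_quad (u : Fin r → ℂ) (X : Matrix (Fin r) (Fin r) ℂ) :
    star u ⬝ᵥ (Xᴴ *ᵥ u) = star (star u ⬝ᵥ (X *ᵥ u)) := by
  rw [← Matrix.star_dotProduct, star_mulVec, ← Matrix.dotProduct_mulVec]

lemma vecMulVec_mulVec' (w v y : Fin r → ℂ) :
    Matrix.vecMulVec w v *ᵥ y = (v ⬝ᵥ y) • w := by
  ext i
  simp only [Matrix.mulVec, Matrix.vecMulVec_apply, dotProduct, Pi.smul_apply,
    smul_eq_mul, Finset.sum_mul, Finset.mul_sum]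
  exact Finset.sum_congr rfl fun j _ => by ring

lemma trace_mul_vecMulVec (G : Matrix (Fin r) (Fin r) ℂ) (w : Fin r → ℂ) :
    (G * Matrix.vecMulVec w (star w)).trace = star w ⬝ᵥ (G *ᵥ w) := by
  simp only [Matrix.trace, Matrix.diag, Matrix.mul_apply, Matrix.vecMulVec_apply,
    dotProduct, Matrix.mulVec, Pi.star_apply]
  refine Finset.sum_congr rfl fun j _ => ?_
  rw [Finset.mul_sum]
  exact Finset.sum_congr rfl fun i _ => by ring

end Helpers

lemma lemA {n K L : ℕ} (σs σe R : ℝ) (hσs : 0 < σs) (hσe : 0 < σe)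
    (hs : Fin K → Fin n → ℂ) (he : Fin L → Fin n → ℂ)
    {S : Set (Matrix (Fin n) (Fin n) ℂ)}
    (hS : S = {Q : Matrix (Fin n) (Fin n) ℂ | Q.PosSemidef ∧ ∀ k l,
      (2:ℝ) ^ R - 1 ≤
        (1 / σs ^ 2) * (dotProduct (star (hs k)) (Q.mulVec (hs k))).re
        - ((2:ℝ) ^ R / σe ^ 2) * (dotProduct (star (he l)) (Q.mulVec (he l))).re})
    {Q : Matrix (Fin n) (Fin n) ℂ} (hQS : Q ∈ S)
    (hopt : ∀ Q' ∈ S, Q.trace.re ≤ Q'.trace.re) :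
    Q.rank ≤ K := by
  classical
  by_contra hK
  push_neg at hK
  have hQmem := hQS
  rw [hS, Set.mem_setOf_eq] at hQmem
  obtain ⟨hQpsd, hQcon⟩ := hQmem
  obtain ⟨V, hfac, hinj⟩ := exists_factor hQpsd
  set us : Fin K → Fin Q.rank → ℂ := fun k => Vᴴ *ᵥ hs k with hus
  set ue : Fin L → Fin Q.rank → ℂ := fun l => Vᴴ *ᵥ he l with hue
  -- find w ≠ 0 orthogonal to all us k
  have hA : ∃ w : Fin Q.rank → ℂ, w ≠ 0 ∧ ∀ k, star (us k) ⬝ᵥ w = 0 := by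
    set A : Matrix (Fin K) (Fin Q.rank) ℂ := Matrix.of (fun k => star (us k)) with hAdef
    have hni : ¬ Function.Injective A.mulVecLin := by
      intro hi
      have := LinearMap.finrank_le_finrank_of_injective hi
      rw [Module.finrank_fintype_fun_eq_card, Module.finrank_fintype_fun_eq_card,
        Fintype.card_fin, Fintype.card_fin] at this
      omega
    obtain ⟨x, y, hxy, hne⟩ := Function.not_injective_iff.mp hni
    refine ⟨x - y, sub_ne_zero_of_ne hne, fun k => ?_⟩
    have : A.mulVecLin (x - y) = 0 := by rw [map_sub, hxy, sub_self]
    have := congrFun (congrArg (fun f => (f : (Fin K → ℂ))) this) k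
    simpa [Matrix.mulVecLin_apply, Matrix.mulVec, hAdef, Pi.star_def, Complex.star_def] using this
  obtain ⟨w, hw0, hworth⟩ := hA
  set c : ℂ := star w ⬝ᵥ w with hc
  have hcre : c = ((star w ⬝ᵥ w).re : ℂ) := by rw [hc, dp_self]; simp
  have hcpos : 0 < (star w ⬝ᵥ w).re := dp_self_re_pos hw0
  have hc0 : c ≠ 0 := by rw [hcre]; exact_mod_cast ne_of_gt (by exact_mod_cast hcpos)
  set P : Matrix (Fin Q.rank) (Fin Q.rank) ℂ := Matrix.vecMulVec w (star w) with hP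
  set N : Matrix (Fin Q.rank) (Fin Q.rank) ℂ := 1 - c⁻¹ • P with hN
  have hPherm : Pᴴ = P := by
    ext i j
    simp [hP, Matrix.conjTranspose_apply, Matrix.vecMulVec_apply, mul_comm]
  have hPP : P * P = c • P := by
    ext i j
    simp only [hP, Matrix.mul_apply, Matrix.vecMulVec_apply, Matrix.smul_apply, smul_eq_mul,
      hc, dotProduct, Pi.star_apply, Finset.sum_mul, Finset.mul_sum]
    refine Finset.sum_congr rfl fun t _ => by ring
  have hNherm : Nᴴ = N := by
    rw [hN, Matrix.conjTranspose_sub, Matrix.conjTranspose_smul, hPherm,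
      Matrix.conjTranspose_one]
    congr 1
    rw [hcre]
    simp [← Complex.ofReal_inv]
  have hNN : N * N = N := by
    have hAA : (c⁻¹ • P) * (c⁻¹ • P) = c⁻¹ • P := by
      rw [Matrix.smul_mul, Matrix.mul_smul, hPP, smul_smul, smul_smul]
      congr 1
      field_simp
    rw [hN, sub_mul, one_mul, mul_sub, mul_one, hAA]
    abel
  have hNpsd : N.PosSemidef := by
    have : N = N * Nᴴ := by rw [hNherm, hNN]
    rw [this]
    exact Matrix.posSemidef_self_mul_conjTranspose N
  set Q' : Matrix (Fin n) (Fin n) ℂ := V * N * Vᴴ with hQ'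
  have hQ'psd : Q'.PosSemidef := hNpsd.mul_mul_conjTranspose_same V
  -- forms
  have hQform : ∀ x : Fin n → ℂ, star x ⬝ᵥ (Q *ᵥ x) = star (Vᴴ *ᵥ x) ⬝ᵥ (Vᴴ *ᵥ x) := by
    intro x
    conv_lhs => rw [hfac,
      show V * Vᴴ = V * (1 : Matrix (Fin Q.rank) (Fin Q.rank) ℂ) * Vᴴ by rw [Matrix.mul_one]]
    rw [quad_form, Matrix.one_mulVec]
  have hQ'form : ∀ x : Fin n → ℂ, star x ⬝ᵥ (Q' *ᵥ x) =
      star (Vᴴ *ᵥ x) ⬝ᵥ (Vᴴ *ᵥ x)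
        - c⁻¹ * ((star w ⬝ᵥ (Vᴴ *ᵥ x)) * (star (Vᴴ *ᵥ x) ⬝ᵥ w)) := by
    intro x
    rw [hQ', quad_form]
    set y := Vᴴ *ᵥ x
    rw [hN, Matrix.sub_mulVec, Matrix.one_mulVec, Matrix.smul_mulVec, hP,
      vecMulVec_mulVec', dotProduct_sub, dotProduct_smul]
    rw [dotProduct_smul]
    simp only [smul_eq_mul]
  -- membership of Q'
  have hQ'S : Q' ∈ S := by
    rw [hS, Set.mem_setOf_eq]
    refine ⟨hQ'psd, fun k l => ?_⟩
    have hk : (star (hs k) ⬝ᵥ (Q' *ᵥ hs k)) = star (hs k) ⬝ᵥ (Q *ᵥ hs k) := by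
      rw [hQ'form, hQform]
      rw [show star w ⬝ᵥ (Vᴴ *ᵥ hs k) = star (star (us k) ⬝ᵥ w) by
        rw [Matrix.star_dotProduct]]
      rw [hworth k]
      simp
    have hl : (star (he l) ⬝ᵥ (Q' *ᵥ he l)).re = (star (he l) ⬝ᵥ (Q *ᵥ he l)).re
        - ((star w ⬝ᵥ w).re)⁻¹ * Complex.normSq (star w ⬝ᵥ ue l) := by
      rw [hQ'form, hQform]
      rw [show star (Vᴴ *ᵥ he l) ⬝ᵥ w = star (star w ⬝ᵥ (Vᴴ *ᵥ he l)) from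
        Matrix.star_dotProduct _ _]
      rw [show (star w ⬝ᵥ (Vᴴ *ᵥ he l)) * star (star w ⬝ᵥ (Vᴴ *ᵥ he l))
          = ((Complex.normSq (star w ⬝ᵥ ue l) : ℝ) : ℂ) by
        rw [hue]; exact Complex.mul_conj _]
      rw [hcre, ← Complex.ofReal_inv, ← Complex.ofReal_mul, Complex.sub_re,
        Complex.ofReal_re]
    have hbase := hQcon k l
    rw [hk, hl]
    have h1 : 0 ≤ ((star w ⬝ᵥ w).re)⁻¹ * Complex.normSq (star w ⬝ᵥ ue l) :=
      mul_nonneg (inv_nonneg.mpr (le_of_lt hcpos)) (Complex.normSq_nonneg _)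
    have h2 : 0 < (2:ℝ) ^ R / σe ^ 2 := by positivity
    nlinarith [hbase, mul_nonneg (le_of_lt h2) h1]
  -- trace strictly decreases
  have htr : Q'.trace.re < Q.trace.re := by
    have hexp : Q' = Q - c⁻¹ • (V * P * Vᴴ) := by
      rw [hQ', hN, Matrix.mul_sub, Matrix.mul_one, Matrix.sub_mul, Matrix.mul_smul,
        Matrix.smul_mul, ← hfac]
    have htrP : (V * P * Vᴴ).trace = star (V *ᵥ w) ⬝ᵥ (V *ᵥ w) := by
      rw [hP, Matrix.trace_mul_cycle V (Matrix.vecMulVec w (star w)) Vᴴ, trace_mul_vecMulVec]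
      rw [← Matrix.mulVec_mulVec, Matrix.dotProduct_mulVec, ← star_mulVec]
    have hz : (V *ᵥ w) ≠ 0 := fun h => hw0 (hinj w h)
    have hpos : 0 < (star (V *ᵥ w) ⬝ᵥ (V *ᵥ w)).re := dp_self_re_pos hz
    rw [hexp, Matrix.trace_sub, Matrix.trace_smul, htrP, dp_self]
    rw [dp_self, Complex.ofReal_re] at hpos
    rw [hcre, dp_self]
    simp only [Complex.sub_re, smul_eq_mul, ← Complex.ofReal_inv, ← Complex.ofReal_mul,
      Complex.ofReal_re]
    have : 0 < ((star w ⬝ᵥ w).re)⁻¹ * ∑ i, Complex.normSq ((V *ᵥ w) i) :=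
      mul_pos (inv_pos.mpr hcpos) hpos
    simp only [dp_self, Complex.ofReal_re] at this ⊢
    linarith
  exact absurd (hopt Q' hQ'S) (not_le.mpr htr)

set_option maxHeartbeats 2000000 in
lemma lemB {n K L : ℕ} (σs σe R : ℝ) (hσs : 0 < σs) (hσe : 0 < σe)
    (hs : Fin K → Fin n → ℂ) (he : Fin L → Fin n → ℂ)
    {S : Set (Matrix (Fin n) (Fin n) ℂ)}
    (hS : S = {Q : Matrix (Fin n) (Fin n) ℂ | Q.PosSemidef ∧ ∀ k l,
      (2:ℝ) ^ R - 1 ≤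
        (1 / σs ^ 2) * (dotProduct (star (hs k)) (Q.mulVec (hs k))).re
        - ((2:ℝ) ^ R / σe ^ 2) * (dotProduct (star (he l)) (Q.mulVec (he l))).re})
    {Q : Matrix (Fin n) (Fin n) ℂ} (hQS : Q ∈ S)
    (hopt : ∀ Q' ∈ S, Q.trace.re ≤ Q'.trace.re)
    (hmin : ∀ Q' ∈ S, (∀ Q'' ∈ S, Q'.trace.re ≤ Q''.trace.re) → Q.rank ≤ Q'.rank) :
    Q.rank ^ 2 ≤ K * L := by
  classical
  by_contra hKL
  push_neg at hKL
  have hQmem := hQS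
  rw [hS, Set.mem_setOf_eq] at hQmem
  obtain ⟨hQpsd, hQcon⟩ := hQmem
  obtain ⟨V, hfac, hinj⟩ := exists_factor hQpsd
  have hQform : ∀ x : Fin n → ℂ, star x ⬝ᵥ (Q *ᵥ x) = star (Vᴴ *ᵥ x) ⬝ᵥ (Vᴴ *ᵥ x) := by
    intro x
    conv_lhs => rw [hfac,
      show V * Vᴴ = V * (1 : Matrix (Fin Q.rank) (Fin Q.rank) ℂ) * Vᴴ by rw [Matrix.mul_one]]
    rw [quad_form, Matrix.one_mulVec]
  set F : Matrix (Fin Q.rank) (Fin Q.rank) ℂ → Fin K × Fin L → ℂ :=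
    fun X kl => ((1 / σs ^ 2 : ℝ) : ℂ) * (star (Vᴴ *ᵥ hs kl.1) ⬝ᵥ (X *ᵥ (Vᴴ *ᵥ hs kl.1)))
      - (((2:ℝ) ^ R / σe ^ 2 : ℝ) : ℂ) * (star (Vᴴ *ᵥ he kl.2) ⬝ᵥ (X *ᵥ (Vᴴ *ᵥ he kl.2)))
    with hF
  set Ψ : Matrix (Fin Q.rank) (Fin Q.rank) ℂ →ₗ[ℂ] (Fin K × Fin L → ℂ) :=
    { toFun := F,
      map_add' := by
        intro X Y
        funext kl
        simp only [hF, Matrix.add_mulVec, dotProduct_add, Pi.add_apply]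
        ring,
      map_smul' := by
        intro a X
        funext kl
        simp only [hF, Matrix.smul_mulVec, dotProduct_smul, smul_eq_mul,
          RingHom.id_apply, Pi.smul_apply]
        ring } with hΨ
  have hΨF : ∀ Y, Ψ Y = F Y := fun Y => rfl
  have hX : ∃ X : Matrix (Fin Q.rank) (Fin Q.rank) ℂ, X ≠ 0 ∧ Ψ X = 0 := by
    have hni : ¬ Function.Injective Ψ := by
      intro hi
      have hle := LinearMap.finrank_le_finrank_of_injective hi
      rw [Module.finrank_fintype_fun_eq_card, Module.finrank_matrix,
        Module.finrank_self, Fintype.card_fin, Fintype.card_prod, Fintype.card_fin,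
        Fintype.card_fin, mul_one] at hle
      have hsq : Q.rank ^ 2 = Q.rank * Q.rank := sq Q.rank
      omega
    obtain ⟨x, y, hxy, hne⟩ := Function.not_injective_iff.mp hni
    exact ⟨x - y, sub_ne_zero_of_ne hne, by rw [map_sub, hxy, sub_self]⟩
  obtain ⟨X, hX0, hFX⟩ := hX
  have hFconj : ∀ (Y : Matrix (Fin Q.rank) (Fin Q.rank) ℂ) (kl : Fin K × Fin L),
      F Yᴴ kl = star (F Y kl) := by
    intro Y kl
    simp only [hF]
    rw [conj_quad, conj_quad, star_sub, star_mul', star_mul']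
    simp [Complex.star_def, Complex.conj_ofReal, mul_comm]
  have hFXc : Ψ Xᴴ = 0 := by
    funext kl
    rw [hΨF, hFconj, ← hΨF, hFX]
    simp
  have hΔex : ∃ Δ : Matrix (Fin Q.rank) (Fin Q.rank) ℂ, Δ ≠ 0 ∧ Δᴴ = Δ ∧ Ψ Δ = 0 := by
    by_cases h1 : X + Xᴴ ≠ 0
    · exact ⟨X + Xᴴ, h1,
        by rw [Matrix.conjTranspose_add, Matrix.conjTranspose_conjTranspose, add_comm],
        by rw [map_add, hFX, hFXc, add_zero]⟩
    · push_neg at h1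
      refine ⟨Complex.I • (X - Xᴴ), ?_, ?_, ?_⟩
      · have hXh : Xᴴ = -X := by
          exact eq_neg_of_add_eq_zero_left (by rwa [add_comm] at h1)
        rw [hXh, sub_neg_eq_add]
        intro h
        rw [smul_eq_zero] at h
        rcases h with h | h
        · exact Complex.I_ne_zero h
        · apply hX0
          have : (2 : ℂ) • X = 0 := by rw [two_smul]; exact h
          simpa [smul_eq_zero] using this
      · rw [Matrix.conjTranspose_smul, Matrix.conjTranspose_sub,
          Matrix.conjTranspose_conjTranspose]
        simp only [Complex.star_def, Complex.conj_I, neg_smul, smul_sub, neg_sub]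
        abel
      · rw [_root_.map_smul, map_sub, hFX, hFXc, sub_zero, smul_zero]
  obtain ⟨Δ, hΔ0, hΔh, hΔΨ⟩ := hΔex
  have hΔcon : ∀ k l, ((1 / σs ^ 2 : ℝ) : ℂ) * (star (Vᴴ *ᵥ hs k) ⬝ᵥ (Δ *ᵥ (Vᴴ *ᵥ hs k)))
      - (((2:ℝ) ^ R / σe ^ 2 : ℝ) : ℂ) * (star (Vᴴ *ᵥ he l) ⬝ᵥ (Δ *ᵥ (Vᴴ *ᵥ he l))) = 0 := by
    intro k l
    have := congrFun hΔΨ (k, l)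
    rw [hΨF] at this
    exact this
  -- spectral data of Δ
  have hΔH : Δ.IsHermitian := hΔh
  set μ : Fin Q.rank → ℝ := hΔH.eigenvalues with hμ
  set W : Matrix (Fin Q.rank) (Fin Q.rank) ℂ :=
    (Matrix.IsHermitian.eigenvectorUnitary hΔH : Matrix (Fin Q.rank) (Fin Q.rank) ℂ) with hW
  have hW1 : W * star W = 1 :=
    Matrix.mem_unitaryGroup_iff.mp (Matrix.IsHermitian.eigenvectorUnitary hΔH).2
  have hspecΔ : Δ = W * Matrix.diagonal (RCLike.ofReal ∘ μ) * star W := hΔH.spectral_theorem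
  have hr0 : 0 < Q.rank := by
    rcases Nat.eq_zero_or_pos Q.rank with h | h
    · rw [h] at hKL; simp at hKL
    · exact h
  have hex : ∃ i, μ i ≠ 0 := by
    by_contra hall
    push_neg at hall
    apply hΔ0
    rw [hspecΔ, show Matrix.diagonal (RCLike.ofReal ∘ μ) = (0 : Matrix (Fin Q.rank) (Fin Q.rank) ℂ) from by
      rw [show RCLike.ofReal ∘ μ = fun _ => (0 : ℂ) from funext fun i => by simp [hall i],
        Matrix.diagonal_zero]]
    rw [mul_zero, zero_mul]
  obtain ⟨i1, hi1⟩ := hex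
  obtain ⟨i0, -, hmax⟩ := Finset.exists_max_image Finset.univ (fun i => |μ i|)
    ⟨i1, Finset.mem_univ i1⟩
  have hμi0 : μ i0 ≠ 0 := by
    intro h
    have h2 := hmax i1 (Finset.mem_univ i1)
    rw [h] at h2
    simp only [abs_zero] at h2
    exact hi1 (abs_eq_zero.mp (le_antisymm h2 (abs_nonneg _)))
  -- diagonalization of the perturbation
  have hM : ∀ t : ℝ, (1 : Matrix (Fin Q.rank) (Fin Q.rank) ℂ) + (t:ℂ) • Δ
      = W * Matrix.diagonal (RCLike.ofReal ∘ (fun i => 1 + t * μ i)) * star W := by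
    intro t
    have hdiag : Matrix.diagonal (RCLike.ofReal ∘ (fun i => 1 + t * μ i))
        = (1 : Matrix (Fin Q.rank) (Fin Q.rank) ℂ)
          + (t:ℂ) • Matrix.diagonal (RCLike.ofReal ∘ μ) := by
      rw [← Matrix.diagonal_one, ← Matrix.diagonal_smul, Matrix.diagonal_add]
      refine congrArg _ (funext fun i => ?_)
      simp only [Pi.smul_apply, Function.comp_apply, smul_eq_mul,
        show (RCLike.ofReal : ℝ → ℂ) = Complex.ofReal from rfl]
      push_cast
      ring
    rw [hdiag, Matrix.mul_add, Matrix.add_mul, Matrix.mul_one, hW1, Matrix.mul_smul,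
      Matrix.smul_mul, ← hspecΔ]
  have hMpsd : ∀ t : ℝ, (∀ i, 0 ≤ 1 + t * μ i) →
      ((1 : Matrix (Fin Q.rank) (Fin Q.rank) ℂ) + (t:ℂ) • Δ).PosSemidef := by
    intro t ht
    rw [hM t]
    have hD : (Matrix.diagonal (RCLike.ofReal ∘ (fun i => 1 + t * μ i)) :
        Matrix (Fin Q.rank) (Fin Q.rank) ℂ).PosSemidef :=
      Matrix.posSemidef_diagonal_iff.mpr fun i => by
        simpa using Complex.zero_le_real.mpr (ht i)
    have h2 := hD.mul_mul_conjTranspose_same W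
    rwa [Matrix.star_eq_conjTranspose]
  have hpert : ∀ t : ℝ,
      V * ((1 : Matrix (Fin Q.rank) (Fin Q.rank) ℂ) + (t:ℂ) • Δ) * Vᴴ
        = Q + (t:ℂ) • (V * Δ * Vᴴ) := by
    intro t
    rw [Matrix.mul_add, Matrix.mul_one, Matrix.add_mul, Matrix.mul_smul, Matrix.smul_mul,
      ← hfac]
  have hform : ∀ (t : ℝ) (x : Fin n → ℂ),
      star x ⬝ᵥ ((V * ((1 : Matrix (Fin Q.rank) (Fin Q.rank) ℂ) + (t:ℂ) • Δ) * Vᴴ) *ᵥ x)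
        = star (Vᴴ *ᵥ x) ⬝ᵥ (Vᴴ *ᵥ x)
          + (t:ℂ) * (star (Vᴴ *ᵥ x) ⬝ᵥ (Δ *ᵥ (Vᴴ *ᵥ x))) := by
    intro t x
    rw [quad_form, Matrix.add_mulVec, Matrix.one_mulVec, Matrix.smul_mulVec,
      dotProduct_add, dotProduct_smul, smul_eq_mul]
  have hmem : ∀ t : ℝ, (∀ i, 0 ≤ 1 + t * μ i) →
      (V * ((1 : Matrix (Fin Q.rank) (Fin Q.rank) ℂ) + (t:ℂ) • Δ) * Vᴴ) ∈ S := by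
    intro t ht
    rw [hS, Set.mem_setOf_eq]
    refine ⟨(hMpsd t ht).mul_mul_conjTranspose_same V, fun k l => ?_⟩
    have hc0 := hQcon k l
    rw [hQform (hs k), hQform (he l)] at hc0
    have hre : (1 / σs ^ 2) * (star (Vᴴ *ᵥ hs k) ⬝ᵥ (Δ *ᵥ (Vᴴ *ᵥ hs k))).re
        - ((2:ℝ) ^ R / σe ^ 2) * (star (Vᴴ *ᵥ he l) ⬝ᵥ (Δ *ᵥ (Vᴴ *ᵥ he l))).re = 0 := by
      have := congrArg Complex.re (hΔcon k l)
      simpa only [Complex.sub_re, Complex.re_ofReal_mul, Complex.zero_re] using this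
    rw [show (dotProduct (star (hs k))
        ((V * ((1 : Matrix (Fin Q.rank) (Fin Q.rank) ℂ) + (t:ℂ) • Δ) * Vᴴ).mulVec (hs k)))
        = star (Vᴴ *ᵥ hs k) ⬝ᵥ (Vᴴ *ᵥ hs k)
          + (t:ℂ) * (star (Vᴴ *ᵥ hs k) ⬝ᵥ (Δ *ᵥ (Vᴴ *ᵥ hs k))) from hform t (hs k)]
    rw [show (dotProduct (star (he l))
        ((V * ((1 : Matrix (Fin Q.rank) (Fin Q.rank) ℂ) + (t:ℂ) • Δ) * Vᴴ).mulVec (he l)))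
        = star (Vᴴ *ᵥ he l) ⬝ᵥ (Vᴴ *ᵥ he l)
          + (t:ℂ) * (star (Vᴴ *ᵥ he l) ⬝ᵥ (Δ *ᵥ (Vᴴ *ᵥ he l))) from hform t (he l)]
    simp only [Complex.add_re, Complex.re_ofReal_mul]
    have hkey : (1 / σs ^ 2) * ((star (Vᴴ *ᵥ hs k) ⬝ᵥ (Vᴴ *ᵥ hs k)).re
          + t * (star (Vᴴ *ᵥ hs k) ⬝ᵥ (Δ *ᵥ (Vᴴ *ᵥ hs k))).re)
        - ((2:ℝ) ^ R / σe ^ 2) * ((star (Vᴴ *ᵥ he l) ⬝ᵥ (Vᴴ *ᵥ he l)).re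
          + t * (star (Vᴴ *ᵥ he l) ⬝ᵥ (Δ *ᵥ (Vᴴ *ᵥ he l))).re)
        = ((1 / σs ^ 2) * (star (Vᴴ *ᵥ hs k) ⬝ᵥ (Vᴴ *ᵥ hs k)).re
            - ((2:ℝ) ^ R / σe ^ 2) * (star (Vᴴ *ᵥ he l) ⬝ᵥ (Vᴴ *ᵥ he l)).re)
          + t * ((1 / σs ^ 2) * (star (Vᴴ *ᵥ hs k) ⬝ᵥ (Δ *ᵥ (Vᴴ *ᵥ hs k))).re
            - ((2:ℝ) ^ R / σe ^ 2) * (star (Vᴴ *ᵥ he l) ⬝ᵥ (Δ *ᵥ (Vᴴ *ᵥ he l))).re) := by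
      ring
    rw [hkey, hre, mul_zero, add_zero]
    exact hc0
  have htrace : ∀ t : ℝ,
      (V * ((1 : Matrix (Fin Q.rank) (Fin Q.rank) ℂ) + (t:ℂ) • Δ) * Vᴴ).trace.re
        = Q.trace.re + t * (V * Δ * Vᴴ).trace.re := by
    intro t
    rw [hpert t, Matrix.trace_add, Matrix.trace_smul, Complex.add_re, smul_eq_mul,
      Complex.re_ofReal_mul]
  set τ : ℝ := (V * Δ * Vᴴ).trace.re with hτdef
  by_cases hτ : τ = 0
  · -- rank reduction case
    set t : ℝ := -(μ i0)⁻¹ with ht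
    have habs : ∀ i, |t * μ i| ≤ 1 := by
      intro i
      rw [abs_mul, ht, abs_neg, abs_inv]
      have h0 : 0 < |μ i0| := abs_pos.mpr hμi0
      calc |μ i0|⁻¹ * |μ i| ≤ |μ i0|⁻¹ * |μ i0| :=
            mul_le_mul_of_nonneg_left (hmax i (Finset.mem_univ i)) (inv_nonneg.mpr h0.le)
        _ = 1 := inv_mul_cancel₀ h0.ne'
    have hbound : ∀ i, 0 ≤ 1 + t * μ i := by
      intro i
      have := (abs_le.mp (habs i)).1
      linarith
    have hQ'S := hmem t hbound
    have htr' : (V * ((1 : Matrix (Fin Q.rank) (Fin Q.rank) ℂ) + (t:ℂ) • Δ) * Vᴴ).trace.re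
        = Q.trace.re := by
      rw [htrace t, hτ, mul_zero, add_zero]
    have hopt' : ∀ Q'' ∈ S,
        (V * ((1 : Matrix (Fin Q.rank) (Fin Q.rank) ℂ) + (t:ℂ) • Δ) * Vᴴ).trace.re
          ≤ Q''.trace.re := by
      intro Q'' h
      rw [htr']
      exact hopt Q'' h
    have hminle := hmin _ hQ'S hopt'
    set d : Fin Q.rank → ℝ := fun i => 1 + t * μ i with hd
    have hdi0 : d i0 = 0 := by
      rw [hd]
      simp only [ht, neg_mul, inv_mul_cancel₀ hμi0]
      ring
    set sd : Fin Q.rank → ℂ := fun i => (Real.sqrt (d i) : ℂ) with hsd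
    have hsdstar : star sd = sd := funext fun i => by
      simp [hsd, Complex.star_def, Complex.conj_ofReal]
    have hdd : Matrix.diagonal sd * Matrix.diagonal sd
        = Matrix.diagonal (RCLike.ofReal ∘ d) := by
      rw [Matrix.diagonal_mul_diagonal]
      refine congrArg _ (funext fun i => ?_)
      simp only [hsd, Pi.mul_apply, Function.comp_apply, ← Complex.ofReal_mul,
        Real.mul_self_sqrt (hbound i),
        show (RCLike.ofReal : ℝ → ℂ) = Complex.ofReal from rfl]
      exact congrArg _ (Real.mul_self_sqrt (hbound i))
    have hBB : V * ((1 : Matrix (Fin Q.rank) (Fin Q.rank) ℂ) + (t:ℂ) • Δ) * Vᴴ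
        = (V * W * Matrix.diagonal sd) * (V * W * Matrix.diagonal sd)ᴴ := by
      rw [hM t, Matrix.conjTranspose_mul, Matrix.conjTranspose_mul,
        Matrix.diagonal_conjTranspose, hsdstar, Matrix.star_eq_conjTranspose, ← hdd]
      simp only [Matrix.mul_assoc]
    have hrank : (V * ((1 : Matrix (Fin Q.rank) (Fin Q.rank) ℂ) + (t:ℂ) • Δ) * Vᴴ).rank
        < Q.rank := by
      rw [hBB, Matrix.rank_self_mul_conjTranspose]
      have h1 : (V * W * Matrix.diagonal sd).rank ≤ (Matrix.diagonal sd).rank :=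
        Matrix.rank_mul_le_right _ _
      have h2 : (Matrix.diagonal sd).rank = Fintype.card {i // sd i ≠ 0} :=
        Matrix.rank_diagonal sd
      have h3 : Fintype.card {i // sd i ≠ 0} < Fintype.card (Fin Q.rank) :=
        Fintype.card_subtype_lt (x := i0) (by simp [hsd, hdi0])
      rw [Fintype.card_fin] at h3
      omega
    omega
  · -- strict improvement case
    set ε : ℝ := (|μ i0| + 1)⁻¹ with hε
    have hεpos : 0 < ε := by
      rw [hε]
      positivity
    set t : ℝ := if 0 < τ then -ε else ε with ht
    have habs : |t| = ε := by
      rw [ht]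
      split_ifs <;> simp [abs_of_pos hεpos]
    have hbound : ∀ i, 0 ≤ 1 + t * μ i := by
      intro i
      have h2 : |t * μ i| ≤ ε * |μ i0| := by
        rw [abs_mul, habs]
        exact mul_le_mul_of_nonneg_left (hmax i (Finset.mem_univ i)) hεpos.le
      have h3 : ε * (|μ i0| + 1) = 1 := by
        rw [hε]
        exact inv_mul_cancel₀ (by positivity)
      have h4 : ε * |μ i0| < 1 := by nlinarith [abs_nonneg (μ i0), hεpos]
      have := (abs_le.mp (le_of_lt (lt_of_le_of_lt h2 h4))).1
      linarith
    have htτ : t * τ < 0 := by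
      rw [ht]
      rcases lt_trichotomy τ 0 with h | h | h
      · rw [if_neg (not_lt.mpr h.le)]
        exact mul_neg_of_pos_of_neg hεpos h
      · exact absurd h hτ
      · rw [if_pos h]
        nlinarith
    have hQ'S := hmem t hbound
    have := hopt _ hQ'S
    rw [htrace t] at this
    linarith

end Stmt14Aux

/-- Rank bound for the SDP relaxation of the secure multicast power-minimization:
if the trace minimum over the feasible set `S` is attained, then there is an optimal
`Q* ∈ S` with `rank(Q*) ≤ K` and `rank(Q*)² ≤ K·L`, i.e. `rank(Q*) ≤ min(K, √(KL))`. -/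
theorem stmt14 {n K L : ℕ} (σs σe R : ℝ) (hσs : 0 < σs) (hσe : 0 < σe) (hR : 0 < R)
    (hs : Fin K → Fin n → ℂ) (he : Fin L → Fin n → ℂ)
    (S : Set (Matrix (Fin n) (Fin n) ℂ))
    (hS : S = {Q : Matrix (Fin n) (Fin n) ℂ | Q.PosSemidef ∧ ∀ k l,
      (2:ℝ) ^ R - 1 ≤
        (1 / σs ^ 2) * (dotProduct (star (hs k)) (Q.mulVec (hs k))).re
        - ((2:ℝ) ^ R / σe ^ 2) * (dotProduct (star (he l)) (Q.mulVec (he l))).re})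
    (hne : S.Nonempty)
    (hatt : ∃ Q0 ∈ S, ∀ Q ∈ S, Q0.trace.re ≤ Q.trace.re) :
    ∃ Qstar ∈ S, (∀ Q ∈ S, Qstar.trace.re ≤ Q.trace.re) ∧
      Qstar.rank ≤ K ∧ Qstar.rank ^ 2 ≤ K * L := by

  classical
  obtain ⟨Q0, hQ0S, hQ0opt⟩ := hatt
  set T : Set ℕ := {m | ∃ Q ∈ S, (∀ Q' ∈ S, Q.trace.re ≤ Q'.trace.re) ∧ Q.rank = m} with hT
  have hTne : T.Nonempty := ⟨Q0.rank, Q0, hQ0S, hQ0opt, rfl⟩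
  obtain ⟨Q, hQS', hQopt, hQrank⟩ := Nat.sInf_mem hTne
  refine ⟨Q, hQS', hQopt, ?_, ?_⟩
  · exact Stmt14Aux.lemA σs σe R hσs hσe hs he hS hQS' hQopt
  · refine Stmt14Aux.lemB σs σe R hσs hσe hs he hS hQS' hQopt ?_
    intro Q' hQ'S hQ'opt
    rw [hQrank]
    exact Nat.sInf_le ⟨Q', hQ'S, hQ'opt, rfl⟩
end
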